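/- arXiv:1706.06295 — 3 statements merged into one kernel-verified Lean document; each statement's English description precedes it below -/
import Mathlib

section
/- Let μ be a finite positive Borel measure on ℝ whose support is a compact set containing infinitely many points, let 1 < p < ∞ and n ∈ ℕ, and let P_{n+1,p} be the unique monic real polynomial of degree n+1 minimizing ∫ |P(x)|^p dμ(x) among monic real polynomials of degree n+1. Then every complex zero of P_{n+1,p} lies in the closure of the convex hull of the support of μ, viewed as a subset of ℂ. -/
open MeasureTheory Polynomial

/-- The (topological) support of a Borel measure on `ℝ`. -/
def measureSupport (μ : Measure ℝ) : Set ℝ :=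
  {x : ℝ | ∀ U : Set ℝ, IsOpen U → x ∈ U → μ U ≠ 0}

lemma measure_compl_measureSupport (μ : Measure ℝ) : μ (measureSupport μ)ᶜ = 0 := by
  apply measure_null_of_locally_null
  intro x hx
  simp only [measureSupport, Set.mem_compl_iff, Set.mem_setOf_eq] at hx
  push_neg at hx
  obtain ⟨U, hUo, hxU, hU0⟩ := hx
  exact ⟨U, mem_nhdsWithin_of_mem_nhds (hUo.mem_nhds hxU), hU0⟩

lemma integrable_of_continuous (μ : Measure ℝ) [IsFiniteMeasure μ] {K : Set ℝ}
    (hK : IsCompact K) (hμ : μ Kᶜ = 0) {g : ℝ → ℝ} (hg : Continuous g) :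
    Integrable g μ := by
  obtain ⟨M, hM⟩ := hK.exists_bound_of_continuousOn hg.continuousOn
  refine Integrable.mono' (integrable_const M) hg.aestronglyMeasurable ?_
  filter_upwards [(mem_ae_iff (μ := μ) (s := K)).mpr hμ] with x hx
  exact hM x hx

lemma clamp_sq_le {α β a x : ℝ} (hαβ : α ≤ β) (hx : x ∈ Set.Icc α β) :
    (x - min β (max α a))^2 ≤ (x - a)^2 := by
  obtain ⟨h1, h2⟩ := hx
  rcases le_total a α with h | h
  · rw [max_eq_left h, min_eq_right hαβ]; nlinarith
  · rcases le_total a β with h' | h'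
    · rw [max_eq_right h, min_eq_right h']
    · rw [max_eq_right h, min_eq_left h']; nlinarith

lemma clamp_abs_lt {α β a x : ℝ} (hαβ : α ≤ β) (ha : a ∉ Set.Icc α β) (hx : x ∈ Set.Icc α β) :
    |x - min β (max α a)| < |x - a| := by
  obtain ⟨h1, h2⟩ := hx
  rw [Set.mem_Icc, not_and_or, not_le, not_le] at ha
  rcases ha with h | h
  · rw [max_eq_left h.le, min_eq_right hαβ,
      abs_of_nonneg (by linarith), abs_of_nonneg (by linarith)]
    linarith
  · rw [max_eq_right (hαβ.trans h.le), min_eq_left h.le,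
      abs_of_nonpos (by linarith), abs_of_nonpos (by linarith)]
    linarith

lemma integral_rpow_lt (μ : Measure ℝ) [IsFiniteMeasure μ]
    (hcomp : IsCompact (measureSupport μ)) (hinf : (measureSupport μ).Infinite)
    {p : ℝ} (hp : 0 < p) {P Q : Polynomial ℝ} (hPne : P ≠ 0)
    (hle : ∀ x ∈ measureSupport μ, |Q.eval x| ≤ |P.eval x|)
    (hlt : ∀ x ∈ measureSupport μ, P.eval x ≠ 0 → |Q.eval x| < |P.eval x|) :
    ∫ x, |Q.eval x| ^ p ∂μ < ∫ x, |P.eval x| ^ p ∂μ := by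
  set K := measureSupport μ with hKdef
  have hμc : μ Kᶜ = 0 := measure_compl_measureSupport μ
  have hKae : K ∈ ae μ := mem_ae_iff.mpr hμc
  have hcont : ∀ R : Polynomial ℝ, Continuous fun x => |R.eval x| ^ p := fun R =>
    (R.continuous.abs).rpow_const (fun x => Or.inr hp.le)
  have hiP : Integrable (fun x => |P.eval x| ^ p) μ :=
    integrable_of_continuous μ hcomp hμc (hcont P)
  have hiQ : Integrable (fun x => |Q.eval x| ^ p) μ :=
    integrable_of_continuous μ hcomp hμc (hcont Q)
  have hg : Integrable (fun x => |P.eval x| ^ p - |Q.eval x| ^ p) μ := hiP.sub hiQ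
  have hnn : 0 ≤ᵐ[μ] fun x => |P.eval x| ^ p - |Q.eval x| ^ p := by
    filter_upwards [hKae] with x hx
    have := Real.rpow_le_rpow (abs_nonneg _) (hle x hx) hp.le
    simpa [sub_nonneg] using this
  have hpos : 0 < ∫ x, (|P.eval x| ^ p - |Q.eval x| ^ p) ∂μ := by
    rw [integral_pos_iff_support_of_nonneg_ae hnn hg]
    have hroots : {x : ℝ | P.IsRoot x}.Finite := Polynomial.finite_setOf_isRoot hPne
    obtain ⟨x₀, hmem⟩ := (hinf.diff hroots).nonempty
    have hx₀K : x₀ ∈ K := hmem.1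
    have hx₀ne : P.eval x₀ ≠ 0 := hmem.2
    set U : Set ℝ := {x | P.eval x ≠ 0} with hUdef
    have hUo : IsOpen U := isOpen_compl_singleton.preimage P.continuous
    have hμU : μ U ≠ 0 := hx₀K U hUo hx₀ne
    have hsub : U ∩ K ⊆ Function.support fun x => |P.eval x| ^ p - |Q.eval x| ^ p := by
      rintro x ⟨hxU, hxK⟩
      have h1 := Real.rpow_lt_rpow (abs_nonneg _) (hlt x hxK hxU) hp
      exact fun h => (ne_of_gt (sub_pos.mpr h1)) h
    have hUK : 0 < μ (U ∩ K) := by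
      rcases (zero_le : (0 : ENNReal) ≤ μ (U ∩ K)).lt_or_eq with h | h
      · exact h
      · exfalso
        apply hμU
        have := measure_inter_add_diff (μ := μ) U hcomp.isClosed.measurableSet
        have hdiff : μ (U \ K) = 0 :=
          measure_mono_null (fun y hy => hy.2) hμc
        rw [← this, ← h, hdiff, add_zero]
    exact hUK.trans_le (measure_mono hsub)
  have hsubint := integral_sub hiP hiQ
  rw [hsubint] at hpos
  linarith

/-- Fejér's convex hull theorem for polynomials of minimal `L^p(μ)`-norm: every complex
zero of the minimal monic polynomial lies in the closure of the convex hull of the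
support of `μ`, viewed inside `ℂ`. -/
theorem zeros_in_convex_hull_of_support
    (μ : Measure ℝ) [IsFiniteMeasure μ]
    (hcomp : IsCompact (measureSupport μ))
    (hinf : (measureSupport μ).Infinite)
    (p : ℝ) (hp1 : 1 < p) (n : ℕ)
    (P : Polynomial ℝ) (hPmonic : P.Monic) (hPdeg : P.natDegree = n + 1)
    (hPmin : ∀ Q : Polynomial ℝ, Q.Monic → Q.natDegree = n + 1 →
      ∫ x, |P.eval x| ^ p ∂μ ≤ ∫ x, |Q.eval x| ^ p ∂μ) :
    ∀ z : ℂ, (P.map (algebraMap ℝ ℂ)).IsRoot z →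
      z ∈ closure (convexHull ℝ ((fun x : ℝ => (x : ℂ)) '' measureSupport μ)) := by
  intro z hroot
  by_contra hznot
  have hp0 : (0 : ℝ) < p := zero_lt_one.trans hp1
  set K := measureSupport μ with hKdef
  have hKne : K.Nonempty := hinf.nonempty
  set α := sInf K with hα
  set β := sSup K with hβ
  have hαK : α ∈ K := hcomp.sInf_mem hKne
  have hβK : β ∈ K := hcomp.sSup_mem hKne
  have hαβ : α ≤ β := csInf_le_csSup hKne hcomp.bddBelow hcomp.bddAbove
  have hKIcc : K ⊆ Set.Icc α β := fun x hx =>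
    ⟨csInf_le hcomp.bddBelow hx, le_csSup hcomp.bddAbove hx⟩
  have hgood : ¬ (z.im = 0 ∧ z.re ∈ Set.Icc α β) := by
    rintro ⟨him, hre⟩
    apply hznot
    have hz' : (z.re : ℂ) = z := Complex.ext (by simp) (by simp [him])
    rw [← hz']
    apply subset_closure
    rw [← segment_eq_Icc hαβ] at hre
    obtain ⟨u, v, hu, hv, huv, heq⟩ := hre
    apply segment_subset_convexHull (Set.mem_image_of_mem _ hαK)
      (Set.mem_image_of_mem _ hβK)
    refine ⟨u, v, hu, hv, huv, ?_⟩
    have heq' : u * α + v * β = z.re := by simpa [smul_eq_mul] using heq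
    rw [← heq']
    simp only [Complex.real_smul]
    push_cast
    ring
  set a := z.re with ha
  set a' := min β (max α a) with ha'
  by_cases him : z.im = 0
  · -- real root outside [α, β]
    have hre : a ∉ Set.Icc α β := fun h => hgood ⟨him, h⟩
    have hza : z = (a : ℂ) := Complex.ext (by simp [ha]) (by simp [him])
    have hPa : P.eval a = 0 := by
      have h0 : (P.map (algebraMap ℝ ℂ)).eval ((algebraMap ℝ ℂ) a) = 0 := by
        rw [show (algebraMap ℝ ℂ) a = z by rw [hza]; simp]
        exact hroot
      rw [eval_map, eval₂_at_apply] at h0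
      exact (algebraMap ℝ ℂ).injective (by rw [h0, map_zero])
    obtain ⟨S, hPS⟩ : (X - C a) ∣ P := dvd_iff_isRoot.mpr hPa
    have hSm : S.Monic := (monic_X_sub_C a).of_mul_monic_left (hPS ▸ hPmonic)
    set Q := S * (X - C a') with hQdef
    have hQm : Q.Monic := hSm.mul (monic_X_sub_C a')
    have hdegS : 1 + S.natDegree = n + 1 := by
      have h1 := (monic_X_sub_C a).natDegree_mul hSm
      rw [← hPS, hPdeg, natDegree_X_sub_C] at h1
      omega
    have hQdeg : Q.natDegree = n + 1 := by
      rw [hQdef, hSm.natDegree_mul (monic_X_sub_C a'), natDegree_X_sub_C]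
      omega
    have hle : ∀ x ∈ K, |Q.eval x| ≤ |P.eval x| := by
      intro x hx
      have hIcc := hKIcc hx
      have habs : |x - a'| ≤ |x - a| := (clamp_abs_lt hαβ hre hIcc).le
      rw [hQdef, hPS]
      simp only [eval_mul, eval_sub, eval_X, eval_C, abs_mul]
      calc |S.eval x| * |x - a'| ≤ |S.eval x| * |x - a| :=
            mul_le_mul_of_nonneg_left habs (abs_nonneg _)
        _ = |x - a| * |S.eval x| := mul_comm _ _
    have hlt : ∀ x ∈ K, P.eval x ≠ 0 → |Q.eval x| < |P.eval x| := by
      intro x hx hne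
      have hIcc := hKIcc hx
      have habs : |x - a'| < |x - a| := clamp_abs_lt hαβ hre hIcc
      have hSne : S.eval x ≠ 0 := by
        intro h
        apply hne
        rw [hPS]
        simp [h]
      rw [hQdef, hPS]
      simp only [eval_mul, eval_sub, eval_X, eval_C, abs_mul]
      calc |S.eval x| * |x - a'| < |S.eval x| * |x - a| :=
            mul_lt_mul_of_pos_left habs (abs_pos.mpr hSne)
        _ = |x - a| * |S.eval x| := mul_comm _ _
    have hint := integral_rpow_lt μ hcomp hinf hp0 hPmonic.ne_zero hle hlt
    exact absurd (hPmin Q hQm hQdeg) (not_le.mpr hint)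
  · -- genuinely complex root
    set b := z.im with hb
    have hb2 : 0 < b ^ 2 := sq_pos_of_ne_zero him
    set D : Polynomial ℝ := (X - C a) ^ 2 + C (b ^ 2) with hDdef
    have hdeg2 : ((X - C a : Polynomial ℝ) ^ 2).degree = 2 := by
      rw [degree_pow, degree_X_sub_C]; rfl
    have hCdeg : (C (b ^ 2) : Polynomial ℝ).degree < ((X - C a : Polynomial ℝ) ^ 2).degree := by
      rw [hdeg2]
      exact lt_of_le_of_lt degree_C_le (by decide)
    have hDm : D.Monic := ((monic_X_sub_C a).pow 2).add_of_left hCdeg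
    have hDdeg : D.natDegree = 2 := by
      have : D.degree = 2 := by
        rw [hDdef, degree_add_eq_left_of_degree_lt hCdeg, hdeg2]
      exact natDegree_eq_of_degree_eq_some this
    have hmapD : D.map (algebraMap ℝ ℂ) = (X - C z) * (X - C (starRingEnd ℂ z)) := by
      have h1 : z + starRingEnd ℂ z = ((2 * a : ℝ) : ℂ) := Complex.add_conj z
      have h2 : z * starRingEnd ℂ z = ((a ^ 2 + b ^ 2 : ℝ) : ℂ) := by
        rw [Complex.mul_conj]
        norm_cast
        simp [Complex.normSq_apply, ha, hb]
        ring
      have expand : (X - C z) * (X - C (starRingEnd ℂ z)) =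
          X ^ 2 - C (z + starRingEnd ℂ z) * X + C (z * starRingEnd ℂ z) := by
        rw [map_add, map_mul]; ring
      rw [hDdef]
      simp only [Polynomial.map_add, Polynomial.map_pow, Polynomial.map_sub,
        Polynomial.map_X, Polynomial.map_C, Complex.coe_algebraMap]
      rw [expand, h1, h2]
      push_cast
      rw [map_add, map_mul, map_pow, map_pow, map_ofNat]
      ring
    have hconjroot : (P.map (algebraMap ℝ ℂ)).eval (starRingEnd ℂ z) = 0 := by
      have hcomm : (starRingEnd ℂ).comp (algebraMap ℝ ℂ) = algebraMap ℝ ℂ := by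
        ext x; simp [Complex.conj_ofReal]
      have : (P.map (algebraMap ℝ ℂ)).eval (starRingEnd ℂ z)
          = starRingEnd ℂ ((P.map (algebraMap ℝ ℂ)).eval z) := by
        rw [eval_map, eval_map, hom_eval₂, hcomm]
      rw [this, hroot.eq_zero, map_zero]
    obtain ⟨T, hT⟩ : (X - C z) ∣ P.map (algebraMap ℝ ℂ) := dvd_iff_isRoot.mpr hroot
    have hTroot : T.eval (starRingEnd ℂ z) = 0 := by
      have h0 := hconjroot
      rw [hT] at h0
      simp only [eval_mul, eval_sub, eval_X, eval_C, mul_eq_zero] at h0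
      rcases h0 with h | h
      · exfalso
        apply him
        have : starRingEnd ℂ z = z := by
          have := sub_eq_zero.mp h
          exact this
        exact Complex.conj_eq_iff_im.mp this
      · exact h
    have hdvdC : D.map (algebraMap ℝ ℂ) ∣ P.map (algebraMap ℝ ℂ) := by
      rw [hmapD, hT]
      exact mul_dvd_mul_left _ (dvd_iff_isRoot.mpr hTroot)
    obtain ⟨S, hPS⟩ : D ∣ P :=
      (map_dvd_map (algebraMap ℝ ℂ) (algebraMap ℝ ℂ).injective hDm).mp hdvdC
    have hSm : S.Monic := hDm.of_mul_monic_left (hPS ▸ hPmonic)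
    set Q := S * (X - C a') ^ 2 with hQdef
    have hQm : Q.Monic := hSm.mul ((monic_X_sub_C a').pow 2)
    have hdegS : 2 + S.natDegree = n + 1 := by
      have h1 := hDm.natDegree_mul hSm
      rw [← hPS, hPdeg, hDdeg] at h1
      omega
    have hdeg2' : ((X - C a' : Polynomial ℝ) ^ 2).natDegree = 2 := by
      rw [natDegree_pow, natDegree_X_sub_C]
    have hQdeg : Q.natDegree = n + 1 := by
      rw [hQdef, hSm.natDegree_mul ((monic_X_sub_C a').pow 2), hdeg2']
      omega
    have hevalD : ∀ x : ℝ, D.eval x = (x - a) ^ 2 + b ^ 2 := by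
      intro x
      simp [hDdef]
    have hle : ∀ x ∈ K, |Q.eval x| ≤ |P.eval x| := by
      intro x hx
      have hIcc := hKIcc hx
      have hsq : (x - a') ^ 2 ≤ (x - a) ^ 2 + b ^ 2 := by
        have := clamp_sq_le (a := a) hαβ hIcc
        nlinarith
      have hDpos : 0 < (x - a) ^ 2 + b ^ 2 := by positivity
      rw [hQdef, hPS]
      simp only [eval_mul, eval_pow, eval_sub, eval_X, eval_C, abs_mul, hevalD]
      rw [abs_of_nonneg (sq_nonneg (x - a')), abs_of_pos hDpos]
      calc |S.eval x| * (x - a') ^ 2 ≤ |S.eval x| * ((x - a) ^ 2 + b ^ 2) :=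
            mul_le_mul_of_nonneg_left hsq (abs_nonneg _)
        _ = ((x - a) ^ 2 + b ^ 2) * |S.eval x| := mul_comm _ _
    have hlt : ∀ x ∈ K, P.eval x ≠ 0 → |Q.eval x| < |P.eval x| := by
      intro x hx hne
      have hIcc := hKIcc hx
      have hsq : (x - a') ^ 2 < (x - a) ^ 2 + b ^ 2 := by
        have := clamp_sq_le (a := a) hαβ hIcc
        nlinarith
      have hDpos : 0 < (x - a) ^ 2 + b ^ 2 := by positivity
      have hSne : S.eval x ≠ 0 := by
        intro h
        apply hne
        rw [hPS]
        simp [h]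
      rw [hQdef, hPS]
      simp only [eval_mul, eval_pow, eval_sub, eval_X, eval_C, abs_mul, hevalD]
      rw [abs_of_nonneg (sq_nonneg (x - a')), abs_of_pos hDpos]
      calc |S.eval x| * (x - a') ^ 2 < |S.eval x| * ((x - a) ^ 2 + b ^ 2) :=
            mul_lt_mul_of_pos_left hsq (abs_pos.mpr hSne)
        _ = ((x - a) ^ 2 + b ^ 2) * |S.eval x| := mul_comm _ _
    have hint := integral_rpow_lt μ hcomp hinf hp0 hPmonic.ne_zero hle hlt
    exact absurd (hPmin Q hQm hQdeg) (not_le.mpr hint)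
end

section
/- Let μ be a finite positive Borel measure on ℝ whose support is a compact set containing infinitely many points, let 2 ≤ p < ∞, let n ∈ ℕ, and let x₀, …, x_n be distinct real numbers. For 𝐱 = (x₀,…,x_n) set P_{n+1}(x) := (x − x₀)⋯(x − x_n) and f_k(𝐱) := ∫ |P_{n+1}(x)|^p / (x − x_k) dμ(x), where the integrand is interpreted as (∏_{j≠k}(x − x_j)) · |x − x_k|^{p−1} sgn(x − x_k) · |∏_{j≠k}(x − x_j)|^{p−1} sgn(∏_{j≠k}(x − x_j)). Then f_k is partially differentiable with respect to x_k, with ∂f_k/∂x_k (𝐱) = (1 − p) ∫ |P_{n+1}(x)|^p / (x − x_k)² dμ(x), and in particular ∂f_k/∂x_k (𝐱) < 0. -/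
open MeasureTheory Polynomial Finset

lemma aux_abs_mul_sign (v : ℝ) : |v| * Real.sign v = v := by
  rcases lt_trichotomy v 0 with h | h | h
  · rw [Real.sign_of_neg h, abs_of_neg h]; ring
  · simp [h]
  · rw [Real.sign_of_pos h, abs_of_pos h]; ring

lemma aux_mul_sign (v : ℝ) : v * Real.sign v = |v| := by
  rcases lt_trichotomy v 0 with h | h | h
  · rw [Real.sign_of_neg h, abs_of_neg h]; ring
  · simp [h]
  · rw [Real.sign_of_pos h, abs_of_pos h]; ring

lemma aux_sign_abs_le (v : ℝ) : |Real.sign v| ≤ 1 := by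
  rcases Real.sign_apply_eq v with h | h | h <;> rw [h] <;> norm_num

lemma aux_measurable_sign : Measurable Real.sign := by
  have h : Real.sign = fun r : ℝ => if r < 0 then (-1 : ℝ) else if 0 < r then 1 else 0 := rfl
  rw [h]
  exact Measurable.ite measurableSet_Iio measurable_const
    (Measurable.ite measurableSet_Ioi measurable_const measurable_const)

lemma aux_abs_rpow {p : ℝ} (hp : 2 ≤ p) (a : ℝ) : |a| * |a| ^ (p - 1) = |a| ^ p := by
  by_cases h : a = 0
  · simp [h, Real.zero_rpow (show p - 1 ≠ 0 by intro hc; linarith [sub_eq_zero.mp hc]),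
      Real.zero_rpow (show p ≠ 0 by intro hc; linarith)]
  · have h1 := Real.rpow_add (abs_pos.mpr h) 1 (p - 1)
    rw [Real.rpow_one] at h1
    rw [show (1 : ℝ) + (p - 1) = p by ring] at h1
    exact h1.symm

lemma aux_hasDerivAt_sgnpow {p : ℝ} (hp : 2 ≤ p) (u : ℝ) :
    HasDerivAt (fun v : ℝ => |v| ^ (p - 1) * Real.sign v) ((p - 1) * |u| ^ (p - 2)) u := by
  rcases lt_trichotomy u 0 with hu | hu | hu
  · have h1 : HasDerivAt (fun v : ℝ => -v) (-1) u := (hasDerivAt_id u).neg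
    have h2 : HasDerivAt (fun v : ℝ => (-v) ^ (p - 1)) ((p - 1) * (-u) ^ (p - 1 - 1) * (-1)) u :=
      HasDerivAt.comp u (Real.hasDerivAt_rpow_const (x := -u) (p := p - 1)
        (Or.inl (by linarith))) h1
    have h3 := h2.neg
    have h4 : HasDerivAt (fun v : ℝ => -((-v) ^ (p - 1))) ((p - 1) * |u| ^ (p - 2)) u := by
      refine h3.congr_deriv ?_
      rw [abs_of_neg hu, show p - 1 - 1 = p - 2 by ring]
      ring
    apply h4.congr_of_eventuallyEq
    filter_upwards [Iio_mem_nhds hu] with v hv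
    rw [abs_of_neg hv, Real.sign_of_neg hv]; ring
  · subst hu
    rcases eq_or_lt_of_le hp with hp2 | hp2
    · simp only [← hp2, show (2 : ℝ) - 1 = 1 by norm_num, show (2 : ℝ) - 2 = 0 by norm_num,
        Real.rpow_one, Real.rpow_zero, one_mul, mul_one]
      have hfun : (fun v : ℝ => |v| * Real.sign v) = fun v => v := funext aux_abs_mul_sign
      rw [hfun]
      exact hasDerivAt_id' (𝕜 := ℝ) 0
    · have hval : (p - 1) * |(0 : ℝ)| ^ (p - 2) = 0 := by
        rw [abs_zero, Real.zero_rpow (show p - 2 ≠ 0 by intro hc; linarith [sub_eq_zero.mp hc]),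
          mul_zero]
      rw [hval, hasDerivAt_iff_tendsto_slope]
      have hev : slope (fun v : ℝ => |v| ^ (p - 1) * Real.sign v) 0
          =ᶠ[nhdsWithin (0 : ℝ) {(0 : ℝ)}ᶜ] fun v => |v| ^ (p - 2) := by
        filter_upwards [self_mem_nhdsWithin] with v hv
        have hv0 : v ≠ 0 := hv
        have habs : |v| ^ (p - 1) = |v| ^ (p - 2) * |v| := by
          rw [show p - 1 = (p - 2) + 1 by ring, Real.rpow_add (abs_pos.mpr hv0), Real.rpow_one]
        simp only [slope_def_field, abs_zero, Real.sign_zero, mul_zero,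
          Real.zero_rpow (show p - 1 ≠ 0 by intro hc; linarith [sub_eq_zero.mp hc]), zero_mul,
          sub_zero]
        rw [habs, mul_assoc, aux_abs_mul_sign, mul_div_assoc, div_self hv0, mul_one]
      rw [Filter.tendsto_congr' hev]
      have hc : ContinuousAt (fun v : ℝ => |v| ^ (p - 2)) 0 :=
        ((Real.continuous_rpow_const (by linarith)).comp continuous_abs).continuousAt
      have h0 : |(0 : ℝ)| ^ (p - 2) = 0 := by
        rw [abs_zero, Real.zero_rpow (show p - 2 ≠ 0 by intro hc'; linarith [sub_eq_zero.mp hc'])]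
      have htend : Filter.Tendsto (fun v : ℝ => |v| ^ (p - 2)) (nhds 0) (nhds 0) := by
        simpa [Function.comp, abs_zero,
          Real.zero_rpow (show p - 2 ≠ 0 by intro hc'; linarith [sub_eq_zero.mp hc'])]
          using hc.tendsto
      exact htend.mono_left nhdsWithin_le_nhds
  · have h2 := Real.hasDerivAt_rpow_const (x := u) (p := p - 1) (Or.inl hu.ne')
    rw [show p - 1 - 1 = p - 2 by ring] at h2
    rw [abs_of_pos hu]
    apply h2.congr_of_eventuallyEq
    filter_upwards [Ioi_mem_nhds hu] with v hv
    rw [abs_of_pos hv, Real.sign_of_pos hv, mul_one]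

lemma aux_abs_bound (a c e b d : ℝ) (hb : 0 ≤ b) (hd : 0 ≤ d) (hc : |c| ≤ 1) (he : |e| ≤ 1) :
    |a * (b * c) * (d * e)| ≤ |a| * b * d := by
  have h1 : |a * (b * c) * (d * e)| = |a| * (b * |c|) * (d * |e|) := by
    rw [abs_mul, abs_mul, abs_mul, abs_mul, abs_of_nonneg hb, abs_of_nonneg hd]
  rw [h1]
  have h2 : |a| * (b * |c|) * (d * |e|) ≤ |a| * (b * 1) * (d * 1) := by
    gcongr
  simpa using h2

/-- With `P_{n+1}(x) = ∏_j (x - x_j)` and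
`f_k(𝐱) = ∫ |P_{n+1}(x)|^p / (x - x_k) dμ(x)` (the integrand interpreted as the
everywhere-defined product
`(∏_{j≠k}(x - x_j)) · |x - x_k|^{p-1} sgn(x - x_k) · |∏_{j≠k}(x - x_j)|^{p-1} sgn(∏_{j≠k}(x - x_j))`),
the function `f_k` is partially differentiable with respect to `x_k` with
`∂f_k/∂x_k = (1 - p) ∫ |P_{n+1}(x)|^p / (x - x_k)² dμ(x) < 0`. -/
theorem partial_deriv_fk_xk
    (μ : Measure ℝ) [IsFiniteMeasure μ]
    (hcomp : IsCompact (measureSupport μ))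
    (hinf : (measureSupport μ).Infinite)
    (p : ℝ) (hp2 : 2 ≤ p) (n : ℕ)
    (x : Fin (n + 1) → ℝ) (hx : Function.Injective x) (k : Fin (n + 1))
    (f : (Fin (n + 1) → ℝ) → ℝ)
    (hf : f = fun v : Fin (n + 1) → ℝ => ∫ t : ℝ,
      (∏ j ∈ Finset.univ.erase k, (t - v j)) * |t - v k| ^ (p - 1) * Real.sign (t - v k)
        * |∏ j ∈ Finset.univ.erase k, (t - v j)| ^ (p - 1)
        * Real.sign (∏ j ∈ Finset.univ.erase k, (t - v j)) ∂μ) :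
    HasDerivAt (fun s : ℝ => f (Function.update x k s))
        ((1 - p) * ∫ t : ℝ,
          |∏ j ∈ Finset.univ.erase k, (t - x j)| ^ p * |t - x k| ^ (p - 2) ∂μ) (x k)
      ∧ (1 - p) * (∫ t : ℝ,
          |∏ j ∈ Finset.univ.erase k, (t - x j)| ^ p * |t - x k| ^ (p - 2) ∂μ) < 0 := by
  classical
  have h1p : (1 : ℝ) - p ≠ 0 := by intro hc; nlinarith [sub_eq_zero.mp hc]
  set Q : ℝ → ℝ := fun t => ∏ j ∈ Finset.univ.erase k, (t - x j) with hQdef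
  have hQt : ∀ t : ℝ, (∏ j ∈ Finset.univ.erase k, (t - x j)) = Q t := fun _ => rfl
  simp only [hQt]
  have hQcont : Continuous Q :=
    continuous_finset_prod _ fun j _ => continuous_id.sub continuous_const
  set F : ℝ → ℝ → ℝ := fun s t =>
    Q t * (|t - s| ^ (p - 1) * Real.sign (t - s)) * (|Q t| ^ (p - 1) * Real.sign (Q t)) with hF
  set F' : ℝ → ℝ → ℝ := fun s t => (1 - p) * (|Q t| ^ p * |t - s| ^ (p - 2)) with hF'
  -- rewrite f ∘ update
  have hfeq : (fun s : ℝ => f (Function.update x k s)) = fun s => ∫ t, F s t ∂μ := by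
    funext s
    rw [hf]
    have hprod : ∀ t : ℝ,
        (∏ j ∈ Finset.univ.erase k, (t - Function.update x k s j)) = Q t := fun t =>
      Finset.prod_congr rfl fun j hj => by
        rw [Function.update_of_ne (Finset.ne_of_mem_erase hj)]
    simp only [hprod, Function.update_self]
    congr 1
    funext t
    simp only [hF]
    ring
  -- derivative pointwise
  have hderiv : ∀ (t s : ℝ), HasDerivAt (fun s' => F s' t) (F' s t) s := by
    intro t s
    have h1 : HasDerivAt (fun s' : ℝ => t - s') (-1) s := (hasDerivAt_id s).const_sub t
    have h2 : HasDerivAt (fun s' : ℝ => |t - s'| ^ (p - 1) * Real.sign (t - s'))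
        ((p - 1) * |t - s| ^ (p - 2) * (-1)) s :=
      HasDerivAt.comp s (aux_hasDerivAt_sgnpow hp2 (t - s)) h1
    have h3 := h2.const_mul (Q t * (|Q t| ^ (p - 1) * Real.sign (Q t)))
    have hfun : (fun s' : ℝ => Q t * (|Q t| ^ (p - 1) * Real.sign (Q t)) *
        (|t - s'| ^ (p - 1) * Real.sign (t - s'))) = fun s' => F s' t := by
      funext s'; simp only [hF]; ring
    rw [hfun] at h3
    refine h3.congr_deriv ?_
    have hc : Q t * (|Q t| ^ (p - 1) * Real.sign (Q t)) = |Q t| ^ p := by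
      rw [show Q t * (|Q t| ^ (p - 1) * Real.sign (Q t))
          = (Q t * Real.sign (Q t)) * |Q t| ^ (p - 1) by ring, aux_mul_sign, aux_abs_rpow hp2]
    rw [hc]
    simp only [hF']
    ring
  -- measurability
  have hmeasF : ∀ s : ℝ, AEStronglyMeasurable (F s) μ := by
    intro s
    apply Measurable.aestronglyMeasurable
    simp only [hF]
    have m1 : Measurable fun t : ℝ => |t - s| ^ (p - 1) :=
      ((Real.continuous_rpow_const (by linarith)).comp
        ((continuous_id.sub continuous_const).abs)).measurable
    have m2 : Measurable fun t : ℝ => Real.sign (t - s) :=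
      aux_measurable_sign.comp (continuous_id.sub continuous_const).measurable
    have m3 : Measurable fun t : ℝ => |Q t| ^ (p - 1) :=
      ((Real.continuous_rpow_const (by linarith)).comp hQcont.abs).measurable
    have m4 : Measurable fun t : ℝ => Real.sign (Q t) :=
      aux_measurable_sign.comp hQcont.measurable
    exact (hQcont.measurable.mul (m1.mul m2)).mul (m3.mul m4)
  have hcontF' : ∀ s : ℝ, Continuous (F' s) := by
    intro s
    simp only [hF']
    exact continuous_const.mul
      ((((Real.continuous_rpow_const (by linarith)).comp hQcont.abs)).mul
        ((Real.continuous_rpow_const (by linarith)).comp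
          ((continuous_id.sub continuous_const).abs)))
  -- the complement of the support is null
  have hK0 : μ (measureSupport μ)ᶜ = 0 := by
    apply measure_null_of_locally_null
    intro y hy
    simp only [measureSupport, Set.mem_compl_iff, Set.mem_setOf_eq, not_forall] at hy
    obtain ⟨U, hUopen, hyU, hUμ⟩ := hy
    exact ⟨U, mem_nhdsWithin_of_mem_nhds (hUopen.mem_nhds hyU), by simpa using hUμ⟩
  have haeK : ∀ᵐ t ∂μ, t ∈ measureSupport μ := by
    rw [ae_iff]
    exact hK0
  -- bound
  set G : ℝ → ℝ := fun t => p * (|Q t| ^ p * (|t - x k| + 1) ^ (p - 1)) with hG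
  have hGcont : Continuous G := by
    simp only [hG]
    exact continuous_const.mul
      (((Real.continuous_rpow_const (by linarith)).comp hQcont.abs).mul
        ((Real.continuous_rpow_const (by linarith)).comp
          (((continuous_id.sub continuous_const).abs).add continuous_const)))
  obtain ⟨C, hC⟩ := hcomp.exists_bound_of_continuousOn hGcont.continuousOn
  have hFle : ∀ t : ℝ, ‖F (x k) t‖ ≤ G t := by
    intro t
    simp only [hF, hG, Real.norm_eq_abs]
    have h1 := aux_abs_bound (Q t) (Real.sign (t - x k)) (Real.sign (Q t))
      (|t - x k| ^ (p - 1)) (|Q t| ^ (p - 1))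
      (Real.rpow_nonneg (abs_nonneg _) _) (Real.rpow_nonneg (abs_nonneg _) _)
      (aux_sign_abs_le _) (aux_sign_abs_le _)
    refine h1.trans ?_
    have h2 : |Q t| * |t - x k| ^ (p - 1) * |Q t| ^ (p - 1)
        = |Q t| ^ p * |t - x k| ^ (p - 1) := by
      rw [show |Q t| * |t - x k| ^ (p - 1) * |Q t| ^ (p - 1)
          = (|Q t| * |Q t| ^ (p - 1)) * |t - x k| ^ (p - 1) by ring, aux_abs_rpow hp2]
    rw [h2]
    have h3 : |Q t| ^ p * |t - x k| ^ (p - 1) ≤ |Q t| ^ p * (|t - x k| + 1) ^ (p - 1) :=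
      mul_le_mul_of_nonneg_left
        (Real.rpow_le_rpow (abs_nonneg _) (by linarith [abs_nonneg (t - x k)]) (by linarith))
        (Real.rpow_nonneg (abs_nonneg _) _)
    refine h3.trans ?_
    exact le_mul_of_one_le_left (by positivity) (by linarith)
  have hF'le : ∀ t : ℝ, ∀ s ∈ Metric.ball (x k) 1, ‖F' s t‖ ≤ G t := by
    intro t s hs
    have hds : |s - x k| < 1 := by
      have := Metric.mem_ball.mp hs
      rwa [Real.dist_eq] at this
    have hts : |t - s| ≤ |t - x k| + 1 := by
      have he : t - s = (t - x k) + (x k - s) := by ring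
      rw [he]
      refine (abs_add_le _ _).trans ?_
      have hcomm : |x k - s| = |s - x k| := abs_sub_comm _ _
      linarith
    simp only [hF', hG, Real.norm_eq_abs]
    rw [abs_mul, abs_of_nonneg (by positivity : (0:ℝ) ≤ |Q t| ^ p * |t - s| ^ (p - 2)),
      show |(1:ℝ) - p| = p - 1 by rw [abs_of_nonpos (by linarith)]; ring]
    have hb1 : (0:ℝ) ≤ |t - x k| + 1 := by positivity
    calc (p - 1) * (|Q t| ^ p * |t - s| ^ (p - 2))
        ≤ (p - 1) * (|Q t| ^ p * (|t - x k| + 1) ^ (p - 2)) :=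
          mul_le_mul_of_nonneg_left
            (mul_le_mul_of_nonneg_left
              (Real.rpow_le_rpow (abs_nonneg _) hts (by linarith))
              (Real.rpow_nonneg (abs_nonneg _) _))
            (by linarith)
      _ ≤ (p - 1) * (|Q t| ^ p * (|t - x k| + 1) ^ (p - 1)) :=
          mul_le_mul_of_nonneg_left
            (mul_le_mul_of_nonneg_left
              (Real.rpow_le_rpow_of_exponent_le
                (by linarith [abs_nonneg (t - x k)]) (by linarith))
              (Real.rpow_nonneg (abs_nonneg _) _))
            (by linarith)
      _ ≤ p * (|Q t| ^ p * (|t - x k| + 1) ^ (p - 1)) :=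
          mul_le_mul_of_nonneg_right (by linarith) (by positivity)
  have hboundae : ∀ᵐ t ∂μ, ∀ s ∈ Metric.ball (x k) 1, ‖F' s t‖ ≤ C := by
    filter_upwards [haeK] with t ht s hs
    exact (hF'le t s hs).trans ((le_abs_self _).trans (hC t ht))
  have hFint : Integrable (F (x k)) μ := by
    refine Integrable.mono' (integrable_const C) (hmeasF (x k)) ?_
    filter_upwards [haeK] with t ht
    exact (hFle t).trans ((le_abs_self _).trans (hC t ht))
  obtain ⟨hFI', hDer⟩ :=
    hasDerivAt_integral_of_dominated_loc_of_deriv_le (F := F) (F' := F')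
      (bound := fun _ => C) (Metric.ball_mem_nhds _ one_pos)
      (Filter.Eventually.of_forall hmeasF) hFint
      ((hcontF' (x k)).measurable.aestronglyMeasurable)
      hboundae (integrable_const C)
      (Filter.Eventually.of_forall fun t s hs => hderiv t s)
  have hIeq : ∫ t, F' (x k) t ∂μ
      = (1 - p) * ∫ t, |Q t| ^ p * |t - x k| ^ (p - 2) ∂μ := by
    simp only [hF']
    exact integral_const_mul _ _
  constructor
  · rw [hfeq, ← hIeq]
    exact hDer
  · -- positivity of the integral
    have hIntg : Integrable (fun t => |Q t| ^ p * |t - x k| ^ (p - 2)) μ := by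
      have h2 := hFI'.const_mul (1 - p)⁻¹
      refine Integrable.congr h2 ?_
      filter_upwards with t
      simp only [hF']
      rw [← mul_assoc, inv_mul_cancel₀ h1p, one_mul]
    have hcontg : Continuous (fun t => |Q t| ^ p * |t - x k| ^ (p - 2)) :=
      (((Real.continuous_rpow_const (by linarith)).comp hQcont.abs)).mul
        ((Real.continuous_rpow_const (by linarith)).comp
          ((continuous_id.sub continuous_const).abs))
    obtain ⟨y, hy⟩ := (hinf.diff (Set.finite_range x)).nonempty
    have hyK : y ∈ measureSupport μ := hy.1
    have hyx : y ∉ Set.range x := hy.2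
    have hQy : Q y ≠ 0 := by
      simp only [hQdef]
      exact Finset.prod_ne_zero_iff.mpr fun j _ =>
        sub_ne_zero.mpr fun hc => hyx ⟨j, hc.symm⟩
    have hyk : y - x k ≠ 0 := sub_ne_zero.mpr fun hc => hyx ⟨k, hc.symm⟩
    have hgy : 0 < |Q y| ^ p * |y - x k| ^ (p - 2) :=
      mul_pos (Real.rpow_pos_of_pos (abs_pos.mpr hQy) _)
        (Real.rpow_pos_of_pos (abs_pos.mpr hyk) _)
    have hev : ∀ᶠ t in nhds y, (|Q y| ^ p * |y - x k| ^ (p - 2)) / 2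
        < |Q t| ^ p * |t - x k| ^ (p - 2) :=
      (hcontg.continuousAt).eventually_const_lt (half_lt_self hgy)
    obtain ⟨r, hr0, hball⟩ := Metric.eventually_nhds_iff_ball.mp hev
    have hμB : μ (Metric.ball y r) ≠ 0 :=
      hyK (Metric.ball y r) Metric.isOpen_ball (Metric.mem_ball_self hr0)
    have h3 : 0 < (μ (Metric.ball y r)).toReal :=
      ENNReal.toReal_pos hμB (measure_ne_top μ _)
    have h1 : (|Q y| ^ p * |y - x k| ^ (p - 2)) / 2 * (μ (Metric.ball y r)).toReal
        ≤ ∫ t in Metric.ball y r, |Q t| ^ p * |t - x k| ^ (p - 2) ∂μ :=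
      by have := setIntegral_ge_of_const_le measurableSet_ball (measure_ne_top μ _)
           (fun t ht => (hball t ht).le) hIntg.integrableOn
         rw [smul_eq_mul, mul_comm] at this
         exact this
    have h2 : ∫ t in Metric.ball y r, |Q t| ^ p * |t - x k| ^ (p - 2) ∂μ
        ≤ ∫ t, |Q t| ^ p * |t - x k| ^ (p - 2) ∂μ :=
      setIntegral_le_integral hIntg (Filter.Eventually.of_forall fun t => by positivity)
    have hpos : 0 < ∫ t, |Q t| ^ p * |t - x k| ^ (p - 2) ∂μ := by
      have := mul_pos (half_pos hgy) h3
      linarith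
    exact mul_neg_of_neg_of_pos (by linarith) hpos
end

section
/- Let A ⊂ ℝ be compact, ν a positive Borel measure whose support is contained in A and contains infinitely many points, and 2 ≤ p < ∞. Let U ⊂ ℝ be an open interval, let ω : A × U → (0, ∞) be continuous with ∂ω/∂t existing and continuous, let ȷ : U → (0, ∞) and y : U → ℝ be continuously differentiable, and set dμ(x,t) := ω(x,t) dν(x) + ȷ(t) δ_{y(t)}. Fix distinct reals x₀,…,x_n none equal to y(t), set P_{n+1}(x) := ∏_j (x − x_j), and f_k(𝐱,t) := ∫ |P_{n+1}(x)|^p/(x − x_k) dμ(x,t). Then f_k is partially differentiable in t with ∂f_k/∂t (𝐱,t) = ∫ (|P_{n+1}(x)|^p/(x − x_k)) (∂ω/∂t)(x,t) dν(x) + (ȷ′(t) + ȷ(t) y′(t) R(t)) · |P_{n+1}(y(t))|^p/(y(t) − x_k), where R(t) := Σ_{j=0}^{n} (p − δ_{j,k})/(y(t) − x_j) and δ_{j,k} is the Kronecker delta. -/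
open MeasureTheory Polynomial Finset

lemma measureSupport_compl_null (ν : Measure ℝ) : ν (measureSupport ν)ᶜ = 0 := by
  have h1 : (measureSupport ν)ᶜ = ⋃₀ {V : Set ℝ | IsOpen V ∧ ν V = 0} := by
    ext z
    simp only [Set.mem_compl_iff, measureSupport, Set.mem_setOf_eq, Set.mem_sUnion]
    constructor
    · intro h
      push_neg at h
      obtain ⟨V, hV, hz, h0⟩ := h
      exact ⟨V, ⟨hV, h0⟩, hz⟩
    · rintro ⟨V, ⟨hV, h0⟩, hz⟩ h
      exact h V hV hz h0
  obtain ⟨T, hTc, hTsub, hTeq⟩ :=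
    TopologicalSpace.isOpen_sUnion_countable {V : Set ℝ | IsOpen V ∧ ν V = 0}
      (fun V hV => hV.1)
  rw [h1, ← hTeq]
  exact (measure_sUnion_null_iff hTc).mpr fun V hV => (hTsub hV).2

lemma cont_absRpowSign {p : ℝ} (hp : 1 < p) :
    Continuous fun u : ℝ => |u| ^ (p - 1) * Real.sign u := by
  rw [continuous_iff_continuousAt]
  intro u
  rcases lt_trichotomy u 0 with hu | rfl | hu
  · have h1 : ContinuousAt (fun u : ℝ => |u| ^ (p - 1) * (-1)) u :=
      ((continuous_abs.continuousAt.rpow_const (Or.inr (by linarith))).mul continuousAt_const)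
    apply h1.congr
    filter_upwards [IsOpen.mem_nhds (isOpen_Iio (a := (0:ℝ))) hu] with v hv
    rw [Real.sign_of_neg hv]
  · have h0 : ContinuousAt (fun u : ℝ => |u| ^ (p - 1) * Real.sign u) 0 := by
      unfold ContinuousAt
      have h00 : (fun u : ℝ => |u| ^ (p - 1) * Real.sign u) 0 = 0 := by simp
      rw [h00]
      apply squeeze_zero_norm (a := fun v : ℝ => |v| ^ (p - 1))
      · intro v
        rw [Real.norm_eq_abs, abs_mul, abs_of_nonneg (Real.rpow_nonneg (abs_nonneg v) _)]
        rcases Real.sign_apply_eq v with h | h | h <;>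
          simp [h] <;> nlinarith [Real.rpow_nonneg (abs_nonneg v) (p-1)]
      · have : ContinuousAt (fun v : ℝ => |v| ^ (p - 1)) 0 :=
          continuous_abs.continuousAt.rpow_const (Or.inr (by linarith))
        have h2 : |(0:ℝ)| ^ (p - 1) = 0 := by
          rw [abs_zero, Real.zero_rpow (by linarith)]
        have h3 := this
        unfold ContinuousAt at h3
        simp only [] at h3
        rwa [h2] at h3
    exact h0
  · have h1 : ContinuousAt (fun u : ℝ => |u| ^ (p - 1) * 1) u :=
      ((continuous_abs.continuousAt.rpow_const (Or.inr (by linarith))).mul continuousAt_const)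
    apply h1.congr
    filter_upwards [IsOpen.mem_nhds (isOpen_Ioi (a := (0:ℝ))) hu] with v hv
    rw [Real.sign_of_pos hv]

lemma absRpowSign_eq {p : ℝ} {r : ℝ} (hr : r ≠ 0) :
    |r| ^ (p - 1) * Real.sign r = |r| ^ p / r := by
  have habs : (0:ℝ) < |r| := abs_pos.mpr hr
  have h : |r| ^ p = |r| ^ (p - 1) * |r| := by
    rw [← Real.rpow_add_one (ne_of_gt habs)]
    ring_nf
  rw [h]
  rcases hr.lt_or_gt with h0 | h0
  · rw [Real.sign_of_neg h0, abs_of_neg h0]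
    field_simp
  · rw [Real.sign_of_pos h0, abs_of_pos h0]
    field_simp


theorem aux_main
    (A : Set ℝ) (hA : IsCompact A)
    (ν : Measure ℝ) [IsFiniteMeasure ν]
    (hνA : ∀ᵐ s ∂ν, s ∈ A)
    (U : Set ℝ) (hUopen : IsOpen U)
    (ω ωt : ℝ → ℝ → ℝ)
    (hωpos : ∀ x ∈ A, ∀ t ∈ U, 0 < ω x t)
    (hωcont : ContinuousOn (fun q : ℝ × ℝ => ω q.1 q.2) (A ×ˢ U))
    (hωt : ∀ x ∈ A, ∀ t ∈ U, HasDerivAt (fun s => ω x s) (ωt x t) t)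
    (hωtcont : ContinuousOn (fun q : ℝ × ℝ => ωt q.1 q.2) (A ×ˢ U))
    (J J' : ℝ → ℝ) (hJpos : ∀ t ∈ U, 0 < J t)
    (hJ : ∀ t ∈ U, HasDerivAt J (J' t) t)
    (y y' : ℝ → ℝ) (hy : ∀ t ∈ U, HasDerivAt y (y' t) t)
    (μ : ℝ → Measure ℝ)
    (hμ : ∀ t, μ t = ν.withDensity (fun s => ENNReal.ofReal (ω s t))
      + (ENNReal.ofReal (J t)) • Measure.dirac (y t))
    (g : ℝ → ℝ) (hg : Continuous g)
    (t : ℝ) (ht : t ∈ U)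
    (Dg : ℝ) (hDg : HasDerivAt g Dg (y t)) :
    HasDerivAt (fun t' => ∫ s, g s ∂(μ t'))
      ((∫ s, g s * ωt s t ∂ν) + (J' t * g (y t) + J t * (Dg * y' t))) t := by
  obtain ⟨ε, hε, hball⟩ : ∃ ε > 0, Metric.closedBall t ε ⊆ U := by
    rcases Metric.isOpen_iff.mp hUopen t ht with ⟨δ, hδ, hsub⟩
    refine ⟨δ / 2, by linarith, fun z hz => hsub ?_⟩
    have := Metric.mem_closedBall.mp hz
    exact Metric.mem_ball.mpr (lt_of_le_of_lt this (by linarith))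
  have hballU : Metric.ball t ε ⊆ U := fun z hz => hball (Metric.ball_subset_closedBall hz)
  obtain ⟨C, hC⟩ := hA.exists_bound_of_continuousOn hg.continuousOn
  have hKc : IsCompact (A ×ˢ Metric.closedBall t ε) := hA.prod (isCompact_closedBall t ε)
  have hKsub : (A ×ˢ Metric.closedBall t ε) ⊆ A ×ˢ U :=
    Set.prod_mono_right hball
  obtain ⟨M, hM⟩ := hKc.exists_bound_of_continuousOn (hωtcont.mono hKsub)
  have hres : ν.restrict A = ν := Measure.restrict_eq_self_of_ae_mem hνA
  have hωcont' : ∀ t' ∈ U, ContinuousOn (fun s => ω s t') A := fun t' ht' =>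
    hωcont.comp (Continuous.continuousOn (continuous_id.prodMk continuous_const))
      (fun s hs => ⟨hs, ht'⟩)
  have hωtcont' : ∀ t' ∈ U, ContinuousOn (fun s => ωt s t') A := fun t' ht' =>
    hωtcont.comp (Continuous.continuousOn (continuous_id.prodMk continuous_const))
      (fun s hs => ⟨hs, ht'⟩)
  have hmeas : ∀ t' ∈ U, AEStronglyMeasurable (fun s => g s * ω s t') ν := by
    intro t' ht'
    rw [← hres]
    exact (hg.continuousOn.mul (hωcont' t' ht')).aestronglyMeasurable hA.measurableSet
  have hmeas' : AEStronglyMeasurable (fun s => g s * ωt s t) ν := by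
    rw [← hres]
    exact (hg.continuousOn.mul (hωtcont' t ht)).aestronglyMeasurable hA.measurableSet
  have hInt : ∀ t' ∈ U, Integrable (fun s => g s * ω s t') ν := by
    intro t' ht'
    obtain ⟨C₂, hC₂⟩ := hA.exists_bound_of_continuousOn (hωcont' t' ht')
    refine Integrable.mono' (integrable_const (|C| * |C₂|)) (hmeas t' ht') ?_
    filter_upwards [hνA] with s hs
    rw [norm_mul]
    exact mul_le_mul ((hC s hs).trans (le_abs_self C)) ((hC₂ s hs).trans (le_abs_self C₂))
      (norm_nonneg _) (abs_nonneg C)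
  -- measures: integrability wrt withDensity and dirac parts
  have hdens : ∀ t' ∈ U, AEMeasurable (fun s => (ω s t').toNNReal) ν := by
    intro t' ht'
    rw [← hres]
    exact measurable_real_toNNReal.comp_aemeasurable
      ((hωcont' t' ht').aemeasurable hA.measurableSet)
  have hdirac_int : ∀ t' : ℝ, Integrable g ((ENNReal.ofReal (J t')) • Measure.dirac (y t')) := by
    intro t'
    refine Integrable.smul_measure ?_ ENNReal.ofReal_ne_top
    refine (integrable_const (g (y t'))).congr ?_
    rw [Filter.EventuallyEq, ae_dirac_eq]
    exact Filter.eventually_pure.mpr rfl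
  have hwd_int : ∀ t' ∈ U, Integrable g (ν.withDensity fun s => ENNReal.ofReal (ω s t')) := by
    intro t' ht'
    have hrw : (fun s => ENNReal.ofReal (ω s t')) = fun s => ((ω s t').toNNReal : ENNReal) := rfl
    rw [hrw, integrable_withDensity_iff_integrable_smul₀ (hdens t' ht')]
    refine (hInt t' ht').congr ?_
    filter_upwards [hνA] with s hs
    rw [NNReal.smul_def, Real.coe_toNNReal _ (hωpos s hs t' ht').le, mul_comm, smul_eq_mul]
  have hrepr : ∀ t' ∈ U, (∫ s, g s ∂(μ t'))
      = (∫ s, g s * ω s t' ∂ν) + J t' * g (y t') := by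
    intro t' ht'
    rw [hμ t', integral_add_measure (hwd_int t' ht') (hdirac_int t'),
      integral_smul_measure, integral_dirac, ENNReal.toReal_ofReal (hJpos t' ht').le,
      smul_eq_mul]
    congr 1
    rw [show (fun s => ENNReal.ofReal (ω s t')) = fun s => ((ω s t').toNNReal : ENNReal) from rfl,
      integral_withDensity_eq_integral_smul₀ (hdens t' ht') g]
    refine integral_congr_ae ?_
    filter_upwards [hνA] with s hs
    rw [NNReal.smul_def, Real.coe_toNNReal _ (hωpos s hs t' ht').le, smul_eq_mul, mul_comm]
  -- Part A: differentiation under the integral sign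
  have partA := hasDerivAt_integral_of_dominated_loc_of_deriv_le
    (F := fun t' s => g s * ω s t') (F' := fun t' s => g s * ωt s t')
    (μ := ν) (x₀ := t) (bound := fun _ => |C| * |M|) (Metric.ball_mem_nhds t hε)
    (Filter.eventually_of_mem (hUopen.mem_nhds ht) (fun t' ht' => hmeas t' ht'))
    (hInt t ht) hmeas'
    (by
      filter_upwards [hνA] with s hs
      intro t' ht'
      rw [norm_mul]
      refine mul_le_mul ((hC s hs).trans (le_abs_self C)) ?_ (norm_nonneg _) (abs_nonneg C)
      exact (hM (s, t') ⟨hs, Metric.ball_subset_closedBall ht'⟩).trans (le_abs_self M))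
    (integrable_const _)
    (by
      filter_upwards [hνA] with s hs
      intro t' ht'
      exact (hωt s hs t' (hballU ht')).const_mul (g s))
  -- Part B
  have hgy : HasDerivAt (fun t' => g (y t')) (Dg * y' t) t := hDg.comp t (hy t ht)
  have partB : HasDerivAt (fun t' => J t' * g (y t'))
      (J' t * g (y t) + J t * (Dg * y' t)) t := (hJ t ht).mul hgy
  have heq : (fun t' => ∫ s, g s ∂(μ t'))
      =ᶠ[nhds t] fun t' => (∫ s, g s * ω s t' ∂ν) + J t' * g (y t') := by
    filter_upwards [hUopen.mem_nhds ht] with t' ht'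
    exact hrepr t' ht'
  exact (partA.2.add partB).congr_of_eventuallyEq heq





/-- For the family of measures `dμ(x,t) = ω(x,t) dν(x) + J(t) δ_{y(t)}`, fixed distinct
reals `x₀,…,x_n` none equal to `y(t)`, and
`f_k(𝐱,t) = ∫ |P_{n+1}(x)|^p/(x - x_k) dμ(x,t)` (the integrand interpreted as the
everywhere-defined product), `f_k` is partially differentiable in `t` with
`∂f_k/∂t = ∫ (|P_{n+1}(x)|^p/(x - x_k)) (∂ω/∂t)(x,t) dν(x)
  + (J'(t) + J(t) y'(t) R(t)) · |P_{n+1}(y(t))|^p/(y(t) - x_k)`,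
where `R(t) = Σ_{j=0}^{n} (p - δ_{j,k})/(y(t) - x_j)`. -/
theorem partial_deriv_fk_t
    (A : Set ℝ) (hA : IsCompact A)
    (ν : Measure ℝ) [IsFiniteMeasure ν]
    (hνsupp : measureSupport ν ⊆ A) (hνinf : (measureSupport ν).Infinite)
    (p : ℝ) (hp2 : 2 ≤ p) (n : ℕ)
    (U : Set ℝ) (hUopen : IsOpen U) (hUconn : U.OrdConnected)
    (ω : ℝ → ℝ → ℝ) (ωt : ℝ → ℝ → ℝ)
    (hωpos : ∀ x ∈ A, ∀ t ∈ U, 0 < ω x t)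
    (hωcont : ContinuousOn (fun q : ℝ × ℝ => ω q.1 q.2) (A ×ˢ U))
    (hωt : ∀ x ∈ A, ∀ t ∈ U, HasDerivAt (fun s => ω x s) (ωt x t) t)
    (hωtcont : ContinuousOn (fun q : ℝ × ℝ => ωt q.1 q.2) (A ×ˢ U))
    (J : ℝ → ℝ) (J' : ℝ → ℝ) (hJpos : ∀ t ∈ U, 0 < J t)
    (hJ : ∀ t ∈ U, HasDerivAt J (J' t) t) (hJ'cont : ContinuousOn J' U)
    (y : ℝ → ℝ) (y' : ℝ → ℝ)
    (hy : ∀ t ∈ U, HasDerivAt y (y' t) t) (hy'cont : ContinuousOn y' U)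
    (μ : ℝ → Measure ℝ)
    (hμ : ∀ t, μ t = ν.withDensity (fun s => ENNReal.ofReal (ω s t))
      + (ENNReal.ofReal (J t)) • Measure.dirac (y t))
    (x : Fin (n + 1) → ℝ) (hx : Function.Injective x) (k : Fin (n + 1))
    (hxy : ∀ t ∈ U, ∀ j, x j ≠ y t)
    (f : (Fin (n + 1) → ℝ) → ℝ → ℝ)
    (hf : f = fun v t => ∫ s : ℝ,
      (∏ i ∈ Finset.univ.erase k, (s - v i)) * |s - v k| ^ (p - 1) * Real.sign (s - v k)
        * |∏ i ∈ Finset.univ.erase k, (s - v i)| ^ (p - 1)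
        * Real.sign (∏ i ∈ Finset.univ.erase k, (s - v i)) ∂(μ t)) :
    ∀ t ∈ U,
      HasDerivAt (fun s : ℝ => f x s)
        ((∫ s : ℝ,
            ((∏ i ∈ Finset.univ.erase k, (s - x i)) * |s - x k| ^ (p - 1)
              * Real.sign (s - x k) * |∏ i ∈ Finset.univ.erase k, (s - x i)| ^ (p - 1)
              * Real.sign (∏ i ∈ Finset.univ.erase k, (s - x i))) * ωt s t ∂ν)
          + (J' t + J t * y' t
              * (∑ j, (p - if j = k then (1 : ℝ) else 0) / (y t - x j)))
            * (|∏ j, (y t - x j)| ^ p / (y t - x k))) t := by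

  intro t ht
  subst hf
  have hp1 : (1:ℝ) < p := by linarith
  have hνA : ∀ᵐ s ∂ν, s ∈ A := by
    have h0 : ν Aᶜ = 0 :=
      measure_mono_null (Set.compl_subset_compl.mpr hνsupp) (measureSupport_compl_null ν)
    exact ae_iff.mpr h0
  set v := y t with hvdef
  have hvx : ∀ j, v - x j ≠ 0 := fun j => sub_ne_zero.mpr ((hxy t ht j).symm)
  set gbig : ℝ → ℝ := fun s =>
    (∏ i ∈ Finset.univ.erase k, (s - x i)) * |s - x k| ^ (p - 1) * Real.sign (s - x k)
      * |∏ i ∈ Finset.univ.erase k, (s - x i)| ^ (p - 1)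
      * Real.sign (∏ i ∈ Finset.univ.erase k, (s - x i)) with hgdef
  have hQcont : Continuous fun s : ℝ => ∏ i ∈ Finset.univ.erase k, (s - x i) :=
    continuous_finset_prod _ (fun i _ => continuous_id.sub continuous_const)
  have hgcont : Continuous gbig := by
    have hrw : gbig = fun s =>
        (∏ i ∈ Finset.univ.erase k, (s - x i))
          * (|s - x k| ^ (p - 1) * Real.sign (s - x k))
          * (|∏ i ∈ Finset.univ.erase k, (s - x i)| ^ (p - 1)
              * Real.sign (∏ i ∈ Finset.univ.erase k, (s - x i))) := by
      funext s; rw [hgdef]; ring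
    rw [hrw]
    exact (hQcont.mul ((cont_absRpowSign hp1).comp (continuous_id.sub continuous_const))).mul
      ((cont_absRpowSign hp1).comp hQcont)
  -- derivative of the product P
  have hP : HasDerivAt (fun s : ℝ => ∏ j, (s - x j))
      (∑ j, (∏ i ∈ Finset.univ.erase j, (v - x i)) • (1:ℝ)) v :=
    HasDerivAt.fun_finsetProd (fun j _ => (hasDerivAt_id v).sub_const (x j))
  have hPv : (∏ j, (v - x j)) ≠ 0 := Finset.prod_ne_zero_iff.mpr (fun j _ => hvx j)
  have habsP : |∏ j, (v - x j)| ≠ 0 := abs_ne_zero.mpr hPv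
  have hPd : (∑ j, (∏ i ∈ Finset.univ.erase j, (v - x i)) • (1:ℝ))
      = (∏ j, (v - x j)) * ∑ j, (v - x j)⁻¹ := by
    rw [Finset.mul_sum]
    refine Finset.sum_congr rfl fun j _ => ?_
    rw [smul_eq_mul, mul_one]
    have hme := Finset.mul_prod_erase Finset.univ (fun i => v - x i) (Finset.mem_univ j)
    rw [← hme, mul_comm (v - x j), mul_assoc, mul_inv_cancel₀ (hvx j), mul_one]
  have habs : HasDerivAt (fun s : ℝ => |∏ j, (s - x j)|)
      (((SignType.sign (∏ j, (v - x j)) : ℝ))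
        * (∑ j, (∏ i ∈ Finset.univ.erase j, (v - x i)) • (1:ℝ))) v :=
    by have := (hasDerivAt_abs hPv).comp v hP; exact this
  have hrpow : HasDerivAt (fun s : ℝ => |∏ j, (s - x j)| ^ p)
      ((p * |∏ j, (v - x j)| ^ (p - 1))
        * (((SignType.sign (∏ j, (v - x j)) : ℝ))
            * (∑ j, (∏ i ∈ Finset.univ.erase j, (v - x i)) • (1:ℝ)))) v :=
    by have := (Real.hasDerivAt_rpow_const (p := p) (Or.inl habsP)).comp v habs; exact this
  have hden : HasDerivAt (fun s : ℝ => s - x k) 1 v := (hasDerivAt_id v).sub_const (x k)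
  have hφ : HasDerivAt (fun s : ℝ => |∏ j, (s - x j)| ^ p / (s - x k))
      (((p * |∏ j, (v - x j)| ^ (p - 1))
          * (((SignType.sign (∏ j, (v - x j)) : ℝ))
              * (∑ j, (∏ i ∈ Finset.univ.erase j, (v - x i)) • (1:ℝ))) * (v - x k)
        - |∏ j, (v - x j)| ^ p * 1) / (v - x k) ^ 2) v :=
    hrpow.div hden (hvx k)
  -- local identification of gbig with |P|^p/(s - x k)
  have hWopen : IsOpen {s : ℝ | ∀ j, s - x j ≠ 0} := by
    have hrw : {s : ℝ | ∀ j, s - x j ≠ 0} = ⋂ j, {s : ℝ | s ≠ x j} := by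
      ext s; simp [sub_ne_zero]
    rw [hrw]
    exact isOpen_iInter_of_finite fun j => isOpen_ne
  have hvW : v ∈ {s : ℝ | ∀ j, s - x j ≠ 0} := hvx
  have hloc : ∀ s ∈ {s : ℝ | ∀ j, s - x j ≠ 0},
      gbig s = |∏ j, (s - x j)| ^ p / (s - x k) := by
    intro s hs
    have ha : s - x k ≠ 0 := hs k
    have hQ : (∏ i ∈ Finset.univ.erase k, (s - x i)) ≠ 0 :=
      Finset.prod_ne_zero_iff.mpr fun i _ => hs i
    have hfact : (∏ j, (s - x j)) = (s - x k) * ∏ i ∈ Finset.univ.erase k, (s - x i) :=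
      (Finset.mul_prod_erase Finset.univ (fun i => s - x i) (Finset.mem_univ k)).symm
    rw [hfact, abs_mul, Real.mul_rpow (abs_nonneg _) (abs_nonneg _)]
    have e1 := absRpowSign_eq (p := p) ha
    have e2 := absRpowSign_eq (p := p) hQ
    calc gbig s = (∏ i ∈ Finset.univ.erase k, (s - x i))
          * (|s - x k| ^ (p - 1) * Real.sign (s - x k))
          * (|∏ i ∈ Finset.univ.erase k, (s - x i)| ^ (p - 1)
              * Real.sign (∏ i ∈ Finset.univ.erase k, (s - x i))) := by rw [hgdef]; ring
      _ = (∏ i ∈ Finset.univ.erase k, (s - x i)) * (|s - x k| ^ p / (s - x k))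
          * (|∏ i ∈ Finset.univ.erase k, (s - x i)| ^ p
              / (∏ i ∈ Finset.univ.erase k, (s - x i))) := by rw [e1, e2]
      _ = |s - x k| ^ p * |∏ i ∈ Finset.univ.erase k, (s - x i)| ^ p / (s - x k) := by
          field_simp
  have hDg : HasDerivAt gbig
      (((p * |∏ j, (v - x j)| ^ (p - 1))
          * (((SignType.sign (∏ j, (v - x j)) : ℝ))
              * (∑ j, (∏ i ∈ Finset.univ.erase j, (v - x i)) • (1:ℝ))) * (v - x k)
        - |∏ j, (v - x j)| ^ p * 1) / (v - x k) ^ 2) v := by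
    refine hφ.congr_of_eventuallyEq ?_
    filter_upwards [hWopen.mem_nhds hvW] with s hs
    exact hloc s hs
  have main := aux_main A hA ν hνA U hUopen ω ωt hωpos hωcont hωt hωtcont J J' hJpos hJ
    y y' hy μ hμ gbig hgcont t ht _ hDg
  -- simplify the derivative value
  have hsgn : ((SignType.sign (∏ j, (v - x j)) : ℝ)) * (∏ j, (v - x j))
      = |∏ j, (v - x j)| := by
    rcases hPv.lt_or_gt with h | h
    · rw [sign_neg h, abs_of_neg h]; simp
    · rw [sign_pos h, abs_of_pos h]; simp
  have hr1 : |∏ j, (v - x j)| ^ (p - 1) * |∏ j, (v - x j)| = |∏ j, (v - x j)| ^ p := by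
    rw [← Real.rpow_add_one habsP]; ring_nf
  have hR : (∑ j, (p - if j = k then (1:ℝ) else 0) / (v - x j))
      = p * (∑ j, (v - x j)⁻¹) - (v - x k)⁻¹ := by
    have h1 : ∀ j : Fin (n+1), (p - if j = k then (1:ℝ) else 0) / (v - x j)
        = p * (v - x j)⁻¹ - (if j = k then (v - x j)⁻¹ else 0) := by
      intro j
      by_cases h : j = k <;> simp [h, sub_div, div_eq_mul_inv] <;> ring
    simp only [h1]
    rw [Finset.sum_sub_distrib, Finset.sum_ite_eq' Finset.univ k (fun j => (v - x j)⁻¹),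
      if_pos (Finset.mem_univ k), ← Finset.mul_sum]
  have hval : J' t * gbig v + J t
        * ((((p * |∏ j, (v - x j)| ^ (p - 1))
            * (((SignType.sign (∏ j, (v - x j)) : ℝ))
                * (∑ j, (∏ i ∈ Finset.univ.erase j, (v - x i)) • (1:ℝ))) * (v - x k)
          - |∏ j, (v - x j)| ^ p * 1) / (v - x k) ^ 2) * y' t)
      = (J' t + J t * y' t
            * (∑ j, (p - if j = k then (1:ℝ) else 0) / (v - x j)))
          * (|∏ j, (v - x j)| ^ p / (v - x k)) := by
    rw [hloc v hvW, hPd, hR]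
    have hstep : (p * |∏ j, (v - x j)| ^ (p - 1))
          * (((SignType.sign (∏ j, (v - x j)) : ℝ))
              * ((∏ j, (v - x j)) * ∑ j, (v - x j)⁻¹))
        = p * |∏ j, (v - x j)| ^ p * ∑ j, (v - x j)⁻¹ := by
      rw [← mul_assoc ((SignType.sign (∏ j, (v - x j)) : ℝ)), hsgn, ← hr1]; ring
    rw [hstep]
    have hb := hvx k
    field_simp
  rw [hval] at main
  exact main
end
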